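/- Let X and Y be finite-dimensional normed spaces and T : X → Y a injective linear operator with 1 ≤ ‖T‖ and 1 ≤ ‖T⁻¹‖ (where ‖T⁻¹‖ is the norm of the inverse of T : X → T(X)). Then there exists a normed space Z with dim Z ≤ dim X · dim Y and linear isometric embeddings I : X → Z and J : Y → Z such that ‖I − J∘T‖ ≤ ‖T‖·‖T⁻¹‖ − 1. -/

import Mathlib

/-- Type synonym for `X × Y` to carry a custom seminorm. -/
def CorrSpace (X Y : Type) : Type := X × Y

instance {X Y : Type} [AddCommGroup X] [AddCommGroup Y] : AddCommGroup (CorrSpace X Y) :=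
  inferInstanceAs (AddCommGroup (X × Y))

instance {X Y : Type} [AddCommGroup X] [AddCommGroup Y] [Module ℝ X] [Module ℝ Y] :
    Module ℝ (CorrSpace X Y) :=
  inferInstanceAs (Module ℝ (X × Y))

instance {X Y : Type} [AddCommGroup X] [AddCommGroup Y] [Module ℝ X] [Module ℝ Y]
    [Module.Finite ℝ X] [Module.Finite ℝ Y] : Module.Finite ℝ (CorrSpace X Y) :=
  inferInstanceAs (Module.Finite ℝ (X × Y))

set_option maxHeartbeats 2000000 in
/-- Given finite-dimensional normed spaces `X`, `Y` and an injective linear map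
`T : X → Y` with `1 ≤ ‖T‖` and `1 ≤ ‖T⁻¹‖` (the norm of the inverse of `T : X → T(X)`),
there is a normed space `Z` of dimension at most `dim X · dim Y` together with linear
isometric embeddings `I : X → Z`, `J : Y → Z` such that `‖I − J ∘ T‖ ≤ ‖T‖·‖T⁻¹‖ − 1`. -/
theorem exists_correcting_space
    (X Y : Type) [NormedAddCommGroup X] [NormedSpace ℝ X] [FiniteDimensional ℝ X]
    [NormedAddCommGroup Y] [NormedSpace ℝ Y] [FiniteDimensional ℝ Y]
    (T : X →ₗ[ℝ] Y) (hT : Function.Injective ⇑T)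
    (hnT : 1 ≤ ‖LinearMap.toContinuousLinearMap T‖)
    (hnTinv : 1 ≤ ‖LinearMap.toContinuousLinearMap
      ((LinearEquiv.ofInjective T hT).symm.toLinearMap)‖) :
    ∃ (Z : Type) (_ : NormedAddCommGroup Z) (_ : NormedSpace ℝ Z),
      FiniteDimensional ℝ Z ∧
      Module.finrank ℝ Z ≤ Module.finrank ℝ X * Module.finrank ℝ Y ∧
      ∃ (I : X →ₗ[ℝ] Z) (J : Y →ₗ[ℝ] Z),
        (∀ x, ‖I x‖ = ‖x‖) ∧ (∀ y, ‖J y‖ = ‖y‖) ∧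
        ∀ x, ‖I x - J (T x)‖ ≤
          (‖LinearMap.toContinuousLinearMap T‖ *
            ‖LinearMap.toContinuousLinearMap
              ((LinearEquiv.ofInjective T hT).symm.toLinearMap)‖ - 1) * ‖x‖ := by
  classical
  set Tc := LinearMap.toContinuousLinearMap T with hTc
  set S := LinearMap.toContinuousLinearMap ((LinearEquiv.ofInjective T hT).symm.toLinearMap)
    with hS
  set a := ‖Tc‖ with ha
  set b := ‖S‖ with hb
  set c := a * b - 1 with hc_def
  have ha0 : (0:ℝ) < a := lt_of_lt_of_le one_pos hnT
  have hb0 : (0:ℝ) < b := lt_of_lt_of_le one_pos hnTinv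
  have hc : 0 ≤ c := by rw [hc_def]; nlinarith
  -- basic norm inequalities
  have hTle : ∀ x : X, ‖T x‖ ≤ a * ‖x‖ := by
    intro x
    have := Tc.le_opNorm x
    simpa [hTc] using this
  have hTinvle : ∀ x : X, ‖x‖ ≤ b * ‖T x‖ := by
    intro x
    have h := S.le_opNorm ((LinearEquiv.ofInjective T hT) x)
    have h1 : S ((LinearEquiv.ofInjective T hT) x) = x := by
      simp [hS]
    have h2 : ‖((LinearEquiv.ofInjective T hT) x : LinearMap.range T)‖ = ‖T x‖ := by
      rw [Submodule.coe_norm, LinearEquiv.ofInjective_apply]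
    rw [h1, h2] at h
    exact h
  have key1 : ∀ u : X, ‖u‖ ≤ ‖T u‖ + c * ‖u‖ := by
    intro u
    have h := hTinvle u
    have h1 : (0:ℝ) ≤ ‖T u‖ := norm_nonneg _
    have h2 : (0:ℝ) ≤ ‖u‖ := norm_nonneg _
    rw [hc_def]
    nlinarith [mul_nonneg h2 (sq_nonneg (b - 1)),
      mul_nonneg (mul_nonneg (sub_nonneg.mpr hnT) h2) (sq_nonneg b)]
  have key2 : ∀ u : X, ‖T u‖ ≤ (1 + c) * ‖u‖ := by
    intro u
    have h := hTle u
    have h2 : (0:ℝ) ≤ ‖u‖ := norm_nonneg _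
    rw [hc_def]
    nlinarith [mul_nonneg (mul_nonneg ha0.le (sub_nonneg.mpr hnTinv)) h2]
  -- the seminorm on `X × Y`
  set F : (X × Y) → X → ℝ := fun w u => ‖w.1 - u‖ + ‖w.2 + T u‖ + c * ‖u‖ with hF
  have hF0 : ∀ w u, 0 ≤ F w u := by
    intro w u
    simp only [hF]
    have h := mul_nonneg hc (norm_nonneg u)
    have h1 : (0:ℝ) ≤ ‖w.1 - u‖ := norm_nonneg _
    have h2 : (0:ℝ) ≤ ‖w.2 + T u‖ := norm_nonneg _
    linarith
  have hbdd : ∀ w, BddBelow (Set.range (F w)) := by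
    intro w
    exact ⟨0, by rintro r ⟨u, rfl⟩; exact hF0 w u⟩
  set q : (X × Y) → ℝ := fun w => ⨅ u : X, F w u with hq
  have hq_le : ∀ w u, q w ≤ F w u := fun w u => ciInf_le (hbdd w) u
  have hle_q : ∀ (w) (A : ℝ), (∀ u, A ≤ F w u) → A ≤ q w := fun w A h => le_ciInf h
  have hq0 : ∀ w, 0 ≤ q w := fun w => hle_q w 0 (hF0 w)
  have hq_zero : q 0 = 0 := by
    refine le_antisymm ?_ (hq0 0)
    have := hq_le 0 0
    simpa [hF] using this
  have hq_add : ∀ w w', q (w + w') ≤ q w + q w' := by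
    intro w w'
    have h1 : ∀ u u', q (w + w') ≤ F w u + F w' u' := by
      intro u u'
      refine (hq_le (w + w') (u + u')).trans ?_
      simp only [hF, Prod.fst_add, Prod.snd_add, map_add]
      have e1 : ‖w.1 + w'.1 - (u + u')‖ ≤ ‖w.1 - u‖ + ‖w'.1 - u'‖ := by
        have e : w.1 + w'.1 - (u + u') = (w.1 - u) + (w'.1 - u') := by abel
        rw [e]; exact norm_add_le _ _
      have e2 : ‖w.2 + w'.2 + (T u + T u')‖ ≤ ‖w.2 + T u‖ + ‖w'.2 + T u'‖ := by
        have e : w.2 + w'.2 + (T u + T u') = (w.2 + T u) + (w'.2 + T u') := by abel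
        rw [e]; exact norm_add_le _ _
      have e3 : c * ‖u + u'‖ ≤ c * ‖u‖ + c * ‖u'‖ := by
        rw [← mul_add]
        exact mul_le_mul_of_nonneg_left (norm_add_le _ _) hc
      linarith
    have h2 : ∀ u, q (w + w') - F w u ≤ q w' := by
      intro u
      refine hle_q w' _ fun u' => ?_
      have := h1 u u'
      linarith
    have h3 : q (w + w') - q w' ≤ q w := by
      refine hle_q w _ fun u => ?_
      have := h2 u
      linarith
    linarith
  have hq_neg_le : ∀ w, q (-w) ≤ q w := by
    intro w
    refine hle_q w _ fun u => ?_
    refine (hq_le (-w) (-u)).trans_eq ?_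
    simp only [hF, Prod.fst_neg, Prod.snd_neg, map_neg]
    rw [show -w.1 - -u = -(w.1 - u) by abel, show -w.2 + -T u = -(w.2 + T u) by abel,
      norm_neg, norm_neg, norm_neg]
  have hq_neg : ∀ w, q (-w) = q w := by
    intro w
    refine le_antisymm (hq_neg_le w) ?_
    have := hq_neg_le (-w)
    rwa [neg_neg] at this
  have hq_smul : ∀ (r : ℝ) (w), q (r • w) ≤ |r| * q w := by
    intro r w
    rcases eq_or_ne r 0 with hr | hr
    · simp [hr, hq_zero]
    · have habs : (0:ℝ) < |r| := abs_pos.mpr hr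
      have h : q (r • w) / |r| ≤ q w := by
        refine hle_q w _ fun u => ?_
        rw [div_le_iff₀ habs]
        refine le_of_le_of_eq (hq_le (r • w) (r • u)) ?_
        simp only [hF, Prod.smul_fst, Prod.smul_snd, map_smul]
        rw [show r • w.1 - r • u = r • (w.1 - u) by rw [smul_sub],
          show r • w.2 + r • T u = r • (w.2 + T u) by rw [smul_add],
          norm_smul, norm_smul, norm_smul, Real.norm_eq_abs]
        ring
      rw [div_le_iff₀ habs] at h
      linarith [h]
  -- values of the seminorm
  have hqI : ∀ x : X, q (x, 0) = ‖x‖ := by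
    intro x
    refine le_antisymm ?_ ?_
    · have := hq_le (x, 0) 0
      simpa [hF] using this
    · refine hle_q _ _ fun u => ?_
      simp only [hF, zero_add]
      have h1 : ‖x‖ ≤ ‖x - u‖ + ‖u‖ := by
        have := norm_add_le (x - u) u
        simpa using this
      have := key1 u
      linarith
  have hqJ : ∀ y : Y, q (0, y) = ‖y‖ := by
    intro y
    refine le_antisymm ?_ ?_
    · have := hq_le (0, y) 0
      simpa [hF] using this
    · refine hle_q _ _ fun u => ?_
      simp only [hF, zero_sub, norm_neg]
      have h1 : ‖y‖ ≤ ‖y + T u‖ + ‖T u‖ := by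
        have := norm_sub_le (y + T u) (T u)
        simpa using this
      have := key2 u
      linarith
  have hqIJ : ∀ x : X, q (x, -T x) ≤ c * ‖x‖ := by
    intro x
    have := hq_le (x, -T x) x
    simpa [hF] using this
  -- seminormed group structure on the type synonym
  letI pn : AddGroupSeminorm (CorrSpace X Y) :=
    { toFun := fun w => q w
      map_zero' := hq_zero
      add_le' := fun w w' => hq_add w w'
      neg' := fun w => hq_neg w }
  letI : SeminormedAddCommGroup (CorrSpace X Y) := pn.toSeminormedAddCommGroup
  letI : NormedSpace ℝ (CorrSpace X Y) :=
    { (inferInstanceAs (Module ℝ (CorrSpace X Y)) : Module ℝ (CorrSpace X Y)) with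
      norm_smul_le := fun r w => hq_smul r w }
  set Z := SeparationQuotient (CorrSpace X Y) with hZ
  set f : CorrSpace X Y →ₗ[ℝ] Z := (SeparationQuotient.mkCLM ℝ (CorrSpace X Y)).toLinearMap
    with hf
  have hfs : Function.Surjective f := SeparationQuotient.surjective_mk
  haveI hfd : FiniteDimensional ℝ Z := Module.Finite.of_surjective f hfs
  -- linear maps into Z
  set I : X →ₗ[ℝ] Z := f ∘ₗ (LinearMap.inl ℝ X Y : X →ₗ[ℝ] CorrSpace X Y) with hI
  set J : Y →ₗ[ℝ] Z := f ∘ₗ (LinearMap.inr ℝ X Y : Y →ₗ[ℝ] CorrSpace X Y) with hJ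
  have hInorm : ∀ x : X, ‖I x‖ = ‖x‖ := by
    intro x
    have h : ‖I x‖ = q ((x, 0) : X × Y) := rfl
    rw [h, hqI]
  have hJnorm : ∀ y : Y, ‖J y‖ = ‖y‖ := by
    intro y
    have h : ‖J y‖ = q ((0, y) : X × Y) := rfl
    rw [h, hqJ]
  have hdiff : ∀ x : X, ‖I x - J (T x)‖ ≤ c * ‖x‖ := by
    intro x
    have h1 : I x - J (T x) = f (((x, -T x) : X × Y) : CorrSpace X Y) := by
      rw [hI, hJ]
      change f ((x, (0:Y)) : X × Y) - f (((0:X), T x) : X × Y) = _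
      refine (map_sub f _ _).symm.trans ?_
      congr 1
      show ((x, (0:Y)) : X × Y) - ((0, T x) : X × Y) = ((x, -T x) : X × Y)
      rw [Prod.mk_sub_mk, sub_zero, zero_sub]
    rw [h1]
    have h2 : ‖f (((x, -T x) : X × Y) : CorrSpace X Y)‖ = q (x, -T x) := rfl
    rw [h2]
    exact hqIJ x
  -- dimension bookkeeping
  set m := Module.finrank ℝ X with hm
  set n := Module.finrank ℝ Y with hn
  have hmn : m ≤ n := LinearMap.finrank_le_finrank_of_injective hT
  have hrank : Module.finrank ℝ Z + Module.finrank ℝ (LinearMap.ker f) = m + n := by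
    have h := LinearMap.finrank_range_add_finrank_ker f
    rw [LinearMap.range_eq_top.mpr hfs, finrank_top] at h
    rw [h]
    exact (Module.finrank_prod : Module.finrank ℝ (X × Y) = _)
  have hdim : Module.finrank ℝ Z ≤ m * n := by
    rcases Nat.lt_or_ge m 2 with hm2 | hm2
    · have hm01 : m = 0 ∨ m = 1 := by omega
      rcases hm01 with hm0 | hm1
      · -- m = 0 : contradiction with 1 ≤ a
        exfalso
        haveI hsub : Subsingleton X := Module.finrank_zero_iff.mp (hm.symm.trans hm0)
        have hTc0 : Tc = 0 := by
          ext x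
          rw [Subsingleton.elim x 0]
          simp
        rw [ha, hTc0, norm_zero] at ha0
        exact lt_irrefl 0 ha0
      · -- m = 1 : show c = 0 and use the graph of T inside the kernel
        obtain ⟨v, hv0, hv⟩ := (finrank_eq_one_iff' (K := ℝ) (V := X)).mp (hm.symm.trans hm1)
        have hTv0 : T v ≠ 0 := fun h => hv0 (hT (by simpa using h))
        have hnv : (0:ℝ) < ‖v‖ := norm_pos_iff.mpr hv0
        have hnTv : (0:ℝ) < ‖T v‖ := norm_pos_iff.mpr hTv0
        have hA : a ≤ ‖T v‖ / ‖v‖ := by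
          refine Tc.opNorm_le_bound (by positivity) fun x => ?_
          obtain ⟨r, rfl⟩ := hv x
          have e1 : ‖Tc (r • v)‖ = |r| * ‖T v‖ := by
            have : Tc (r • v) = r • T v := by
              simp [hTc, map_smul]
            rw [this, norm_smul, Real.norm_eq_abs]
          have e2 : ‖r • v‖ = |r| * ‖v‖ := by
            rw [norm_smul, Real.norm_eq_abs]
          rw [e1, e2]
          rw [show ‖T v‖ / ‖v‖ * (|r| * ‖v‖) = |r| * ‖T v‖ * (‖v‖ / ‖v‖) by ring,
            div_self (ne_of_gt hnv), mul_one]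
        have hB : b ≤ ‖v‖ / ‖T v‖ := by
          refine S.opNorm_le_bound (by positivity) fun z => ?_
          obtain ⟨x, hx⟩ := z.2
          have hSz : S z = x := by
            have hz : z = (LinearEquiv.ofInjective T hT) x := by
              apply Subtype.ext
              rw [LinearEquiv.ofInjective_apply]
              exact hx.symm
            rw [hz]
            simp [hS]
          have hnz : ‖z‖ = ‖T x‖ := by rw [Submodule.coe_norm, hx]
          rw [hSz, hnz]
          obtain ⟨r, rfl⟩ := hv x
          rw [norm_smul, Real.norm_eq_abs,
            show T (r • v) = r • T v from map_smul T r v, norm_smul, Real.norm_eq_abs]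
          rw [show ‖v‖ / ‖T v‖ * (|r| * ‖T v‖) = |r| * ‖v‖ * (‖T v‖ / ‖T v‖) by ring,
            div_self (ne_of_gt hnTv), mul_one]
        have hab : a * b ≤ 1 := by
          calc a * b ≤ (‖T v‖ / ‖v‖) * (‖v‖ / ‖T v‖) :=
                mul_le_mul hA hB hb0.le (by positivity)
            _ = 1 := by field_simp
        have hc0 : c = 0 := le_antisymm (by rw [hc_def]; linarith) hc
        -- the graph of `-T` lies in the kernel of `f`
        set g : X →ₗ[ℝ] CorrSpace X Y :=
          ((LinearMap.id : X →ₗ[ℝ] X).prod (-T) : X →ₗ[ℝ] X × Y) with hg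
        have hginj : Function.Injective g := fun x₁ x₂ h => congrArg Prod.fst h
        have hgker : LinearMap.range g ≤ LinearMap.ker f := by
          rintro z ⟨x, rfl⟩
          have hnorm : ‖f (g x)‖ = 0 := by
            refine le_antisymm ?_ (norm_nonneg _)
            have h2 : ‖f (g x)‖ = q (x, -T x) := rfl
            rw [h2]
            have := hqIJ x
            rw [hc0, zero_mul] at this
            exact this
          exact LinearMap.mem_ker.mpr (norm_eq_zero.mp hnorm)
        have h1 : Module.finrank ℝ (LinearMap.range g) = m :=
          LinearMap.finrank_range_of_inj hginj
        have h2 : Module.finrank ℝ (LinearMap.range g)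
            ≤ Module.finrank ℝ (LinearMap.ker f) := Submodule.finrank_mono hgker
        have : m ≤ Module.finrank ℝ (LinearMap.ker f) := h1 ▸ h2
        have hmn1 : m * n = n := by rw [hm1, one_mul]
        omega
    · -- 2 ≤ m : m + n ≤ m * n
      have h2n : 2 * n ≤ m * n := Nat.mul_le_mul_right n hm2
      have : m + n ≤ m * n := by omega
      omega
  exact ⟨Z, inferInstance, inferInstance, hfd, hdim, I, J, hInorm, hJnorm,
    fun x => hdiff x⟩
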